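/- Let A and B be finite nonempty index types, let U be a unitary complex matrix indexed by A × B, let σ be a positive semidefinite complex matrix indexed by A × B, and let D₁, D₂ be real diagonal matrices indexed by B with 0 ⪯ D₁ ⪯ D₂ ⪯ I. Then Tr_B(U σ U† (I_A ⊗ D₁)) ⪯ Tr_B(U σ U† (I_A ⊗ D₂)) in the Loewner order, where (Tr_B M)(a,a') = ∑_{b ∈ B} M((a,b),(a',b)). That is, the post-selected output of the hybrid tensor network channel is monotone in the reduction operator. -/

import Mathlib

open Matrix ComplexOrder Kronecker

/-- Partial trace over the second factor `B` of a matrix indexed by `A × B`. -/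
noncomputable def ptraceB {A B : Type*} [Fintype A] [Fintype B]
    (M : Matrix (A × B) (A × B) ℂ) : Matrix A A ℂ :=
  Matrix.of fun a a' => ∑ b : B, M (a, b) (a', b)

/-- The quadratic form of the `b`-slice as a quadratic form of the full matrix. -/
lemma aux_hQ {A B : Type*} [Fintype A] [Fintype B] [DecidableEq B]
    (M : Matrix (A × B) (A × B) ℂ) (x : A → ℂ) (b : B) :
    star (fun p : A × B => if p.2 = b then x p.1 else 0) ⬝ᵥ
      (M *ᵥ fun p : A × B => if p.2 = b then x p.1 else 0)
    = ∑ a : A, ∑ a' : A, star (x a) * M (a, b) (a', b) * x a' := by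
  simp only [dotProduct, mulVec, Pi.star_apply, Fintype.sum_prod_type, apply_ite (star : ℂ → ℂ),
    star_zero, mul_ite, mul_zero, ite_mul, zero_mul, Finset.sum_ite_eq', Finset.mem_univ, if_true]
  refine Finset.sum_congr rfl fun a _ => ?_
  rw [Finset.mul_sum]
  refine Finset.sum_congr rfl fun a' _ => by ring

/-- If `M` is PSD on `A × B` and `e : B → ℝ` is nonnegative, then the weighted partial
trace `(a, a') ↦ ∑ b, M (a,b) (a',b) * e b` is PSD. -/
lemma aux_psd {A B : Type*} [Fintype A] [Fintype B] [DecidableEq B]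
    (M : Matrix (A × B) (A × B) ℂ) (hM : M.PosSemidef)
    (e : B → ℝ) (he : ∀ b, 0 ≤ e b) :
    (Matrix.of fun a a' => ∑ b : B, M (a, b) (a', b) * (e b : ℂ)).PosSemidef := by
  rw [posSemidef_iff_dotProduct_mulVec]
  constructor
  · ext a a'
    simp only [conjTranspose_apply, of_apply, star_sum, star_mul']
    refine Finset.sum_congr rfl fun b _ => ?_
    have h1 : star (M (a', b) (a, b)) = M (a, b) (a', b) := by
      conv_rhs => rw [← hM.1]
      simp [conjTranspose_apply]
    simp [h1, mul_comm]
  · intro x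
    have key : star x ⬝ᵥ ((Matrix.of fun a a' => ∑ b : B, M (a, b) (a', b) * (e b : ℂ)) *ᵥ x)
        = ∑ b : B, (e b : ℂ) *
          (∑ a : A, ∑ a' : A, star (x a) * M (a, b) (a', b) * x a') := by
      simp only [dotProduct, mulVec, Pi.star_apply, of_apply, Finset.mul_sum,
        Finset.sum_mul]
      have swap : ∀ f : A → A → B → ℂ,
          ∑ a : A, ∑ a' : A, ∑ b : B, f a a' b = ∑ b : B, ∑ a : A, ∑ a' : A, f a a' b := by
        intro f
        rw [show (∑ a : A, ∑ a' : A, ∑ b : B, f a a' b)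
            = ∑ a : A, ∑ b : B, ∑ a' : A, f a a' b from
          Finset.sum_congr rfl fun a _ => Finset.sum_comm, Finset.sum_comm]
      rw [swap]
      exact Finset.sum_congr rfl fun b _ => Finset.sum_congr rfl fun a _ =>
        Finset.sum_congr rfl fun a' _ => by ring
    rw [key]
    refine Finset.sum_nonneg fun b _ => ?_
    have h0 : (0 : ℂ) ≤ (e b : ℂ) := by
      rw [Complex.le_def]
      simp [he b]
    rw [← aux_hQ M x b]
    exact mul_nonneg h0 (hM.dotProduct_mulVec_nonneg _)

/-- Entrywise formula for `ptraceB (M * (1 ⊗ₖ diagonal d))`. -/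
lemma ptraceB_mul_kron_diagonal {A B : Type*} [Fintype A] [Fintype B]
    [DecidableEq A] [DecidableEq B]
    (M : Matrix (A × B) (A × B) ℂ) (d : B → ℝ) (a a' : A) :
    ptraceB (M * ((1 : Matrix A A ℂ) ⊗ₖ Matrix.diagonal fun b => (d b : ℂ))) a a'
      = ∑ b : B, M (a, b) (a', b) * (d b : ℂ) := by
  simp only [ptraceB, of_apply, mul_apply, Fintype.sum_prod_type, kroneckerMap_apply,
    one_apply, diagonal_apply, mul_ite, ite_mul, mul_zero, zero_mul, mul_one, one_mul,
    Finset.sum_ite_eq', Finset.sum_ite_eq, Finset.mem_univ, if_true]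

/-- Monotonicity of the post-selected output in the reduction operator: for a unitary `U`,
a positive semidefinite `σ`, and real diagonal matrices `0 ⪯ D₁ ⪯ D₂ ⪯ I` on `B`,
`Tr_B (U σ U† (I_A ⊗ D₁)) ⪯ Tr_B (U σ U† (I_A ⊗ D₂))` in the Loewner order. -/
theorem postSelected_monotone_in_reduction
    {A B : Type*} [Fintype A] [Fintype B] [Nonempty A] [Nonempty B]
    [DecidableEq A] [DecidableEq B]
    (U : Matrix (A × B) (A × B) ℂ) (hU : U ∈ Matrix.unitaryGroup (A × B) ℂ)
    (σ : Matrix (A × B) (A × B) ℂ) (hσ : σ.PosSemidef)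
    (d₁ d₂ : B → ℝ) (hd₁0 : ∀ b, 0 ≤ d₁ b) (hd : ∀ b, d₁ b ≤ d₂ b) (hd₂1 : ∀ b, d₂ b ≤ 1) :
    (ptraceB (U * σ * Uᴴ * ((1 : Matrix A A ℂ) ⊗ₖ Matrix.diagonal fun b => (d₂ b : ℂ))) -
      ptraceB (U * σ * Uᴴ * ((1 : Matrix A A ℂ) ⊗ₖ
        Matrix.diagonal fun b => (d₁ b : ℂ)))).PosSemidef := by
  set M := U * σ * Uᴴ with hMdef
  have hM : M.PosSemidef := by
    have := hσ.mul_mul_conjTranspose_same U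
    rwa [hMdef, Matrix.mul_assoc] at *
    
  have heq : (ptraceB (M * ((1 : Matrix A A ℂ) ⊗ₖ Matrix.diagonal fun b => (d₂ b : ℂ))) -
        ptraceB (M * ((1 : Matrix A A ℂ) ⊗ₖ Matrix.diagonal fun b => (d₁ b : ℂ))))
      = Matrix.of fun a a' => ∑ b : B, M (a, b) (a', b) * ((fun b => d₂ b - d₁ b) b : ℂ) := by
    ext a a'
    simp only [Matrix.sub_apply, ptraceB_mul_kron_diagonal, of_apply, ← Finset.sum_sub_distrib]
    refine Finset.sum_congr rfl fun b _ => ?_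
    push_cast
    ring
  rw [heq]
  exact aux_psd M hM _ fun b => sub_nonneg.mpr (hd b)
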